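/- Discrete energy rate identity with general penalty parameters: suppose U : ℝ → ℝ^{N+1} is differentiable and satisfies, for all t, P U′(t) + a Q U(t) = E B⁽ᴺ⁾ Dₓ U(t) − (√E Dₓ)ᵀ P (√E Dₓ) U(t) + SAT(t), where SAT(t) = σ₀ e₀·(a·U₀(t) − ε₀·(Dₓ U(t))₀) + σ_N e_N·(−ε_N·(Dₓ U(t))_N) with arbitrary real σ₀, σ_N. Then for every t, d/dt (U(t)ᵀ P U(t)) + 2 (√E Dₓ U(t))ᵀ P (√E Dₓ U(t)) = −a·(U₀(t)² + U_N(t)²) + 2(σ₀ + 1)·(a·U₀(t)² − ε₀·U₀(t)·(Dₓ U(t))₀) + 2(σ_N − 1)·(−ε_N·U_N(t)·(Dₓ U(t))_N). -/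

import Mathlib

open Matrix

/-- The boundary matrix `B⁽ⁿ⁾`: `(0,0)` entry `−1`, `(n,n)` entry `1`, all other entries `0`. -/
def Bmat (n : ℕ) : Matrix (Fin (n+1)) (Fin (n+1)) ℝ :=
  Matrix.of fun i j =>
    if i = j ∧ i = Fin.last n then 1 else if i = j ∧ i = 0 then -1 else 0

lemma Bmat_diag (n : ℕ) : Bmat n = Matrix.diagonal
    (fun i => if i = Fin.last n then (1:ℝ) else if i = 0 then -1 else 0) := by
  ext i j
  simp only [Bmat, Matrix.of_apply, Matrix.diagonal_apply]
  by_cases h : i = j <;> simp [h]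

lemma sum_endpoints {n : ℕ} (hn : 1 ≤ n) (f : Fin (n+1) → ℝ)
    (h : ∀ i, i ≠ 0 → i ≠ Fin.last n → f i = 0) :
    ∑ i, f i = f 0 + f (Fin.last n) := by
  have h0 : (0 : Fin (n+1)) ≠ Fin.last n := by
    intro hc
    have := congrArg Fin.val hc
    simp at this
    omega
  rw [show (Finset.univ : Finset (Fin (n+1))) =
      insert 0 (insert (Fin.last n) ((Finset.univ.erase 0).erase (Fin.last n))) from ?_]
  · rw [Finset.sum_insert, Finset.sum_insert]
    · have : ∑ i ∈ (Finset.univ.erase 0).erase (Fin.last n), f i = 0 := by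
        apply Finset.sum_eq_zero
        intro i hi
        simp only [Finset.mem_erase, Finset.mem_univ] at hi
        exact h i hi.2.1 hi.1
      rw [this]; ring
    · simp
    · simp [h0, Ne.symm h0]
  · ext i
    simp only [Finset.mem_insert, Finset.mem_erase, Finset.mem_univ, and_true, iff_true]
    tauto


/-- Discrete energy rate identity with general penalty parameters `σ₀, σ_N`:
if `P U′ + a Q U = E B Dₓ U − (√E Dₓ)ᵀ P (√E Dₓ) U + SAT` with
`SAT = σ₀ e₀ (a U₀ − ε₀ (Dₓ U)₀) + σ_N e_N (−ε_N (Dₓ U)_N)`, then for every `t`,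
`d/dt (Uᵀ P U) + 2 (√E Dₓ U)ᵀ P (√E Dₓ U)
  = −a (U₀² + U_N²) + 2(σ₀+1)(a U₀² − ε₀ U₀ (Dₓ U)₀) + 2(σ_N−1)(−ε_N U_N (Dₓ U)_N)`. -/
theorem stmt6 (N : ℕ) (hN : 1 ≤ N) (a σ₀ σN : ℝ)
    (P Q : Matrix (Fin (N+1)) (Fin (N+1)) ℝ)
    (hP : P.PosDef) (hSBP : Q + Qᵀ = Bmat N)
    (ε : Fin (N+1) → ℝ) (hε : ∀ i, 0 ≤ ε i)
    (E sqrtE Dx : Matrix (Fin (N+1)) (Fin (N+1)) ℝ)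
    (hE : E = Matrix.diagonal ε)
    (hsqrtE : sqrtE = Matrix.diagonal fun i => Real.sqrt (ε i))
    (hDx : Dx = P⁻¹ * Q)
    (U : ℝ → Fin (N+1) → ℝ) (hU : Differentiable ℝ U)
    (hode : ∀ t : ℝ,
      P.mulVec (deriv U t) + a • Q.mulVec (U t)
        = (E * Bmat N * Dx).mulVec (U t)
          - ((sqrtE * Dx)ᵀ * P * (sqrtE * Dx)).mulVec (U t)
          + ((σ₀ * (a * U t 0 - ε 0 * Dx.mulVec (U t) 0)) • (Pi.single 0 1 : Fin (N+1) → ℝ)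
             + (σN * (-(ε (Fin.last N) * Dx.mulVec (U t) (Fin.last N))))
                • (Pi.single (Fin.last N) 1 : Fin (N+1) → ℝ))) :
    ∀ t : ℝ,
      HasDerivAt (fun τ => U τ ⬝ᵥ P.mulVec (U τ))
        (-a * ((U t 0)^2 + (U t (Fin.last N))^2)
          + 2 * (σ₀ + 1) * (a * (U t 0)^2 - ε 0 * U t 0 * Dx.mulVec (U t) 0)
          + 2 * (σN - 1) * (-(ε (Fin.last N) * U t (Fin.last N)
              * Dx.mulVec (U t) (Fin.last N)))
          - 2 * ((sqrtE * Dx).mulVec (U t) ⬝ᵥ P.mulVec ((sqrtE * Dx).mulVec (U t)))) t := by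
  intro t
  have hPt : Pᵀ = P := hP.isHermitian
  set u : Fin (N+1) → ℝ := U t with hu
  set u' : Fin (N+1) → ℝ := deriv U t with hu'
  have hUd : HasDerivAt U u' t := (hU t).hasDerivAt
  have hcomp : ∀ i, HasDerivAt (fun τ => U τ i) (u' i) t := fun i =>
    hasDerivAt_pi.mp hUd i
  -- derivative of the quadratic form
  have key : HasDerivAt (fun τ => U τ ⬝ᵥ P.mulVec (U τ))
      (u' ⬝ᵥ P *ᵥ u + u ⬝ᵥ P *ᵥ u') t := by
    have h1 : HasDerivAt (fun τ => ∑ i, U τ i * ∑ j, P i j * U τ j)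
        (∑ i, (u' i * ∑ j, P i j * u j + u i * ∑ j, P i j * u' j)) t := by
      apply HasDerivAt.fun_sum
      intro i _
      exact (hcomp i).mul (HasDerivAt.fun_sum fun j _ => (hcomp j).const_mul (P i j))
    have e1 : (fun τ => U τ ⬝ᵥ P.mulVec (U τ)) = fun τ => ∑ i, U τ i * ∑ j, P i j * U τ j := by
      funext τ
      simp [dotProduct, Matrix.mulVec]
    have e2 : u' ⬝ᵥ P *ᵥ u + u ⬝ᵥ P *ᵥ u'
        = ∑ i, (u' i * ∑ j, P i j * u j + u i * ∑ j, P i j * u' j) := by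
      rw [Finset.sum_add_distrib]
      simp [dotProduct, Matrix.mulVec]
    rw [e1, e2]
    exact h1
  have hsym : u' ⬝ᵥ P *ᵥ u = u ⬝ᵥ P *ᵥ u' := by
    rw [dotProduct_comm, ← Matrix.vecMul_transpose, hPt, ← Matrix.dotProduct_mulVec]
  -- abbreviations
  set d : Fin (N+1) → ℝ := Dx *ᵥ u with hd
  set W : Fin (N+1) → ℝ := (sqrtE * Dx) *ᵥ u with hW
  have h0last : (0 : Fin (N+1)) ≠ Fin.last N := by
    intro hc
    have := congrArg Fin.val hc
    simp at this
    omega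
  -- the ODE, solved for P *ᵥ u'
  have hPu' : P *ᵥ u' = (E * Bmat N * Dx) *ᵥ u
      - ((sqrtE * Dx)ᵀ * P * (sqrtE * Dx)) *ᵥ u
      + ((σ₀ * (a * u 0 - ε 0 * d 0)) • (Pi.single 0 1 : Fin (N+1) → ℝ)
         + (σN * (-(ε (Fin.last N) * d (Fin.last N))))
            • (Pi.single (Fin.last N) 1 : Fin (N+1) → ℝ))
      - a • Q *ᵥ u := eq_sub_of_add_eq (hode t)
  -- piece A
  have hA : u ⬝ᵥ (E * Bmat N * Dx) *ᵥ u
      = ε (Fin.last N) * u (Fin.last N) * d (Fin.last N) - ε 0 * u 0 * d 0 := by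
    rw [← Matrix.mulVec_mulVec, ← hd, hE, Bmat_diag, Matrix.diagonal_mul_diagonal]
    have : (Matrix.diagonal fun i => ε i * if i = Fin.last N then (1:ℝ) else if i = 0 then -1 else 0) *ᵥ d
        = fun i => (ε i * if i = Fin.last N then (1:ℝ) else if i = 0 then -1 else 0) * d i := by
      funext i; rw [Matrix.mulVec_diagonal]
    rw [this, dotProduct]
    rw [sum_endpoints hN _ (fun i hi0 hiN => by simp [hi0, hiN])]
    simp [h0last, Ne.symm h0last]
    ring
  -- piece C
  have hC : u ⬝ᵥ ((sqrtE * Dx)ᵀ * P * (sqrtE * Dx)) *ᵥ u = W ⬝ᵥ P *ᵥ W := by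
    rw [← Matrix.mulVec_mulVec, ← hW, ← Matrix.mulVec_mulVec,
      Matrix.dotProduct_mulVec, Matrix.vecMul_transpose]
  -- Q piece
  have hQ : u ⬝ᵥ Q *ᵥ u + u ⬝ᵥ Q *ᵥ u = u (Fin.last N) ^ 2 - u 0 ^ 2 := by
    have hQt : u ⬝ᵥ Qᵀ *ᵥ u = u ⬝ᵥ Q *ᵥ u := by
      rw [Matrix.dotProduct_mulVec, Matrix.vecMul_transpose, dotProduct_comm]
    have hB : u ⬝ᵥ Bmat N *ᵥ u = u (Fin.last N) ^ 2 - u 0 ^ 2 := by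
      rw [Bmat_diag]
      have : (Matrix.diagonal fun i => if i = Fin.last N then (1:ℝ) else if i = 0 then -1 else 0) *ᵥ u
          = fun i => (if i = Fin.last N then (1:ℝ) else if i = 0 then -1 else 0) * u i := by
        funext i; rw [Matrix.mulVec_diagonal]
      rw [this, dotProduct]
      rw [sum_endpoints hN _ (fun i hi0 hiN => by simp [hi0, hiN])]
      simp [h0last, Ne.symm h0last]
      ring
    have h2 : u ⬝ᵥ Q *ᵥ u + u ⬝ᵥ Qᵀ *ᵥ u = u (Fin.last N) ^ 2 - u 0 ^ 2 := by
      rw [← dotProduct_add, ← Matrix.add_mulVec, hSBP, hB]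
    rw [hQt] at h2
    exact h2
  -- SAT pieces
  have hS0 : u ⬝ᵥ ((σ₀ * (a * u 0 - ε 0 * d 0)) • (Pi.single 0 1 : Fin (N+1) → ℝ))
      = σ₀ * (a * u 0 - ε 0 * d 0) * u 0 := by
    rw [dotProduct_smul, dotProduct_single]
    simp [mul_comm]
  have hSN : u ⬝ᵥ ((σN * (-(ε (Fin.last N) * d (Fin.last N)))) • (Pi.single (Fin.last N) 1 : Fin (N+1) → ℝ))
      = σN * (-(ε (Fin.last N) * d (Fin.last N))) * u (Fin.last N) := by
    rw [dotProduct_smul, dotProduct_single]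
    simp [mul_comm]
  -- combine
  have hval : u' ⬝ᵥ P *ᵥ u + u ⬝ᵥ P *ᵥ u'
      = -a * ((u 0)^2 + (u (Fin.last N))^2)
        + 2 * (σ₀ + 1) * (a * (u 0)^2 - ε 0 * u 0 * d 0)
        + 2 * (σN - 1) * (-(ε (Fin.last N) * u (Fin.last N) * d (Fin.last N)))
        - 2 * (W ⬝ᵥ P *ᵥ W) := by
    rw [hsym, hPu']
    rw [dotProduct_sub, dotProduct_add, dotProduct_sub,
      dotProduct_add, hA, hC, hS0, hSN, dotProduct_smul]
    have hq : u ⬝ᵥ Q *ᵥ u = (u (Fin.last N) ^ 2 - u 0 ^ 2) / 2 := by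
      linarith [hQ]
    rw [hq]
    simp only [smul_eq_mul]
    ring
  rw [← hval]
  exact key
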